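/- (Lemma 2 of the paper.) For every integer s ≥ 1, χ(s,s) = (Λ·R + Ω·G)^s; that is, the remainder of Σ_{i=0}^{s−1} binom(s,i) Λ^{s−i} R^{s−i} Ω^i G^i upon division by G^s equals (Λ·R + Ω·G)^s. -/

import Mathlib

open Polynomial


theorem aux7 {A : Type*} [CommRing A] [IsDomain A] (L R G : A[X]) (hG : G.Monic) (s : ℕ) (hs : 1 ≤ s) :
    (∑ i ∈ Finset.range s, s.choose i •
        (L ^ (s - i) * R ^ (s - i) * (-((L * R) /ₘ G)) ^ i * G ^ i)) %ₘ G ^ s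
      = (L * R + (-((L * R) /ₘ G)) * G) ^ s := by
  set O : A[X] := -((L * R) /ₘ G) with hO
  set E : A[X] := L * R + O * G with hEdef
  have hGs : (G ^ s).Monic := hG.pow s
  have hE : E = (L * R) %ₘ G := by
    rw [hEdef, hO, modByMonic_eq_sub_mul_div _ G]; ring
  have hElt : E.degree < G.degree := hE ▸ degree_modByMonic_lt _ hG
  have hdeg : (E ^ s).degree < (G ^ s).degree := by
    rcases eq_or_ne E 0 with h | h
    · rw [h, zero_pow (by omega : s ≠ 0), degree_zero]
      exact bot_lt_iff_ne_bot.mpr (degree_ne_bot.mpr hGs.ne_zero)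
    · rw [degree_pow, degree_pow]
      rw [degree_eq_natDegree h, degree_eq_natDegree hG.ne_zero] at hElt ⊢
      have : E.natDegree < G.natDegree := by exact_mod_cast hElt
      simp only [nsmul_eq_mul]
      norm_cast
      exact Nat.mul_lt_mul_of_pos_left this (by omega)
  have hsum : (∑ i ∈ Finset.range s, s.choose i •
      (L ^ (s - i) * R ^ (s - i) * O ^ i * G ^ i)) = E ^ s - O ^ s * G ^ s := by
    have h := add_pow (O * G) (L * R) s
    rw [Finset.sum_range_succ] at h
    have h2 : E ^ s = (∑ i ∈ Finset.range s, (O * G) ^ i * (L * R) ^ (s - i) * (s.choose i : A[X])) + O ^ s * G ^ s := by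
      rw [hEdef, add_comm (L * R), h]; simp [mul_pow]
    rw [eq_sub_iff_add_eq, h2]
    congr 1
    refine Finset.sum_congr rfl fun i _ => ?_
    simp [nsmul_eq_mul, mul_pow]; ring
  rw [hsum, sub_modByMonic, (modByMonic_eq_self_iff hGs).mpr hdeg,
    (modByMonic_eq_zero_iff_dvd hGs).mpr (Dvd.intro_left _ rfl), sub_zero]


noncomputable def Lam (F : Type*) [CommRing F] (t k : ℕ) :
    Polynomial (MvPolynomial (Fin t ⊕ Fin k) F) :=
  X ^ t + ∑ j : Fin t, C (MvPolynomial.X (Sum.inl j)) * X ^ (j : ℕ)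

noncomputable def Pp (F : Type*) [CommRing F] (t k : ℕ) :
    Polynomial (MvPolynomial (Fin t ⊕ Fin k) F) :=
  ∑ i : Fin k, C (MvPolynomial.X (Sum.inr i)) * X ^ (i : ℕ)

noncomputable def liftP (F : Type*) [CommRing F] (t k : ℕ) (f : Polynomial F) :
    Polynomial (MvPolynomial (Fin t ⊕ Fin k) F) :=
  f.map MvPolynomial.C

/-- `Ω`, the negated quotient in the division of `Λ·R` by the monic polynomial `G`. -/
noncomputable def Om (F : Type*) [Field F] (t k : ℕ) (R G : Polynomial F) :
    Polynomial (MvPolynomial (Fin t ⊕ Fin k) F) :=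
  -((Lam F t k * liftP F t k R) /ₘ liftP F t k G)

/-- `χ(s,u) := Λ^{s−u}·(Λ·R + Ω·G)^u` if `u < s`, and
`χ(s,u) := (Σ_{i=0}^{s−1} binom(u,i) Λ^{s−i} R^{u−i} Ω^i G^i) mod G^s` if `u ≥ s`. -/
noncomputable def chi (F : Type*) [Field F] (t k : ℕ) (R G : Polynomial F) (s u : ℕ) :
    Polynomial (MvPolynomial (Fin t ⊕ Fin k) F) :=
  if u < s then
    Lam F t k ^ (s - u) * (Lam F t k * liftP F t k R + Om F t k R G * liftP F t k G) ^ u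
  else
    (∑ i ∈ Finset.range s, u.choose i •
      (Lam F t k ^ (s - i) * liftP F t k R ^ (u - i) * Om F t k R G ^ i * liftP F t k G ^ i))
      %ₘ liftP F t k G ^ s

/-- Lemma 2: `χ(s,s) = (Λ·R + Ω·G)^s`. -/
theorem stmt7 (F : Type*) [Field F] (n t k : ℕ) (hn : 0 < n) (ht : 1 ≤ t) (hk : 1 ≤ k)
    (a b : Fin n → F) (ha : Function.Injective a)
    (G : Polynomial F) (hG : G = ∏ ℓ : Fin n, (X - C (a ℓ)))
    (R : Polynomial F) (hRdeg : R.degree < n) (hR : ∀ ℓ, R.eval (a ℓ) = b ℓ) :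
    ∀ s : ℕ, 1 ≤ s →
      chi F t k R G s s =
        (Lam F t k * liftP F t k R + Om F t k R G * liftP F t k G) ^ s := by
  intro s hs
  have hGm : G.Monic := hG ▸ monic_prod_of_monic _ _ fun _ _ => monic_X_sub_C _
  rw [chi, if_neg (lt_irrefl s)]
  simp only [Om]
  exact aux7 _ _ _ (hGm.map _) s hs
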